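/- Let X₁,…,Xₙ be ℕ-valued random variables on a probability space with E[X₁] < ∞, and set S = X₁+⋯+Xₙ and S₋₁ = X₂+⋯+Xₙ. Fix t ∈ [0,1) and define g(s) = E[s^{X₁} · t^{S₋₁}] for s ∈ [0,1). Then g is differentiable at s = t and t · g'(t) = ∑_{k=0}^∞ t^k · E[X₁ · 1_{\{S=k\}}]; in other words, the ordinary generating function of the sequence of expected allocations of X₁ equals the partial derivative of the joint probability generating function of (X₁, S₋₁) in its first argument, multiplied by t and evaluated with both arguments equal to t. -/

import Mathlib

open MeasureTheory ProbabilityTheory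

/-- The ordinary generating function of the sequence of expected allocations
`E[X₁ · 1_{S=k}]`, `k ∈ ℕ`, equals the partial derivative of the joint pgf of `(X₁, S₋₁)`
in its first argument, times `t`, evaluated with both arguments equal to `t ∈ [0,1)`. -/
theorem ogf_expected_allocation_eq_partial_deriv_pgf
    {Ω : Type*} [MeasurableSpace Ω] (μ : Measure Ω) [IsProbabilityMeasure μ]
    (n : ℕ) (X : Fin (n + 1) → Ω → ℕ) (hX : ∀ i, Measurable (X i))
    (hint : Integrable (fun ω => (X 0 ω : ℝ)) μ)
    (S Sm : Ω → ℕ)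
    (hS : ∀ ω, S ω = ∑ i, X i ω)
    (hSm : ∀ ω, Sm ω = ∑ i : Fin n, X i.succ ω)
    (t : ℝ) (ht : t ∈ Set.Ico (0 : ℝ) 1)
    (g : ℝ → ℝ) (hg : ∀ s, g s = ∫ ω, s ^ (X 0 ω) * t ^ (Sm ω) ∂μ) :
    DifferentiableAt ℝ g t ∧
      t * deriv g t = ∑' k : ℕ, t ^ k * ∫ ω in {ω | S ω = k}, (X 0 ω : ℝ) ∂μ := by
  obtain ⟨ht0, ht1⟩ := ht
  have habs : |t| < 1 := by rw [abs_of_nonneg ht0]; exact ht1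
  have hSmeas : Measurable S := by
    have : S = fun ω => ∑ i, X i ω := funext hS
    rw [this]; exact Finset.measurable_sum _ fun i _ => hX i
  have hSmmeas : Measurable Sm := by
    have : Sm = fun ω => ∑ i : Fin n, X i.succ ω := funext hSm
    rw [this]; exact Finset.measurable_sum _ fun i _ => hX i.succ
  have hSsum : ∀ ω, S ω = X 0 ω + Sm ω := by
    intro ω; rw [hS, hSm, Fin.sum_univ_succ]
  set ε : ℝ := (1 - t) / 2 with hε
  have hεpos : 0 < ε := by rw [hε]; linarith
  have hball : ∀ s ∈ Metric.ball t ε, |s| ≤ 1 := by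
    intro s hs
    have : |s - t| < ε := by simpa [Metric.mem_ball, Real.dist_eq] using hs
    calc |s| = |s - t + t| := by ring_nf
      _ ≤ |s - t| + |t| := abs_add_le _ _
      _ ≤ ε + t := by apply add_le_add this.le; rw [abs_of_nonneg ht0]
      _ ≤ 1 := by rw [hε]; linarith
  have hFmeas : ∀ s : ℝ, AEStronglyMeasurable (fun ω => s ^ X 0 ω * t ^ Sm ω) μ := by
    intro s
    exact (((measurable_from_top (f := fun m : ℕ => s ^ m)).comp (hX 0)).mul
      ((measurable_from_top (f := fun m : ℕ => t ^ m)).comp hSmmeas)).aestronglyMeasurable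
  have hF'meas : AEStronglyMeasurable
      (fun ω => (X 0 ω : ℝ) * t ^ (X 0 ω - 1) * t ^ Sm ω) μ := by
    exact (((measurable_from_top (f := fun m : ℕ => (m : ℝ) * t ^ (m - 1))).comp (hX 0)).mul
      ((measurable_from_top (f := fun m : ℕ => t ^ m)).comp hSmmeas)).aestronglyMeasurable
  have key := hasDerivAt_integral_of_dominated_loc_of_deriv_le (μ := μ)
    (F := fun s ω => s ^ X 0 ω * t ^ Sm ω)
    (F' := fun s ω => (X 0 ω : ℝ) * s ^ (X 0 ω - 1) * t ^ Sm ω)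
    (x₀ := t) (bound := fun ω => (X 0 ω : ℝ)) (Metric.ball_mem_nhds t hεpos)
    (Filter.Eventually.of_forall hFmeas)
    (by
      -- integrability of F t
      refine (integrable_const (1 : ℝ)).mono (hFmeas t) ?_
      refine Filter.Eventually.of_forall fun ω => ?_
      rw [norm_mul, norm_one]
      have h1 : ‖t ^ X 0 ω‖ ≤ 1 := by
        rw [norm_pow, Real.norm_eq_abs]; exact pow_le_one₀ (abs_nonneg t) habs.le
      have h2 : ‖t ^ Sm ω‖ ≤ 1 := by
        rw [norm_pow, Real.norm_eq_abs]; exact pow_le_one₀ (abs_nonneg t) habs.le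
      calc ‖t ^ X 0 ω‖ * ‖t ^ Sm ω‖ ≤ 1 * 1 :=
        mul_le_mul h1 h2 (norm_nonneg _) zero_le_one
      _ = 1 := one_mul 1)
    hF'meas
    (by
      refine Filter.Eventually.of_forall fun ω => fun s hs => ?_
      have hs1 : |s| ≤ 1 := hball s hs
      rw [norm_mul, norm_mul]
      have h1 : ‖(X 0 ω : ℝ)‖ = (X 0 ω : ℝ) := by
        rw [Real.norm_eq_abs, abs_of_nonneg (Nat.cast_nonneg _)]
      have h2 : ‖s ^ (X 0 ω - 1)‖ ≤ 1 := by
        rw [norm_pow, Real.norm_eq_abs]; exact pow_le_one₀ (abs_nonneg s) hs1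
      have h3 : ‖t ^ Sm ω‖ ≤ 1 := by
        rw [norm_pow, Real.norm_eq_abs]; exact pow_le_one₀ (abs_nonneg t) habs.le
      calc ‖(X 0 ω : ℝ)‖ * ‖s ^ (X 0 ω - 1)‖ * ‖t ^ Sm ω‖
          ≤ (X 0 ω : ℝ) * 1 * 1 := by
            apply mul_le_mul _ h3 (norm_nonneg _) (by positivity)
            rw [h1]
            exact mul_le_mul_of_nonneg_left h2 (Nat.cast_nonneg _)
        _ = (X 0 ω : ℝ) := by ring)
    hint
    (by
      refine Filter.Eventually.of_forall fun ω => fun s _ => ?_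
      simpa using (hasDerivAt_pow (X 0 ω) s).mul_const (t ^ Sm ω))
  obtain ⟨hF'int, hderiv⟩ := key
  have hgeq : g = fun s => ∫ ω, s ^ X 0 ω * t ^ Sm ω ∂μ := funext hg
  have hgderiv : HasDerivAt g (∫ ω, (X 0 ω : ℝ) * t ^ (X 0 ω - 1) * t ^ Sm ω ∂μ) t := by
    rw [hgeq]; exact hderiv
  refine ⟨hgderiv.differentiableAt, ?_⟩
  rw [hgderiv.deriv]
  -- t * ∫ F' = ∫ X₀ * t^S
  have hptw : ∀ ω, t * ((X 0 ω : ℝ) * t ^ (X 0 ω - 1) * t ^ Sm ω)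
      = (X 0 ω : ℝ) * t ^ S ω := by
    intro ω
    rcases Nat.eq_zero_or_pos (X 0 ω) with h | h
    · simp [h]
    · rw [hSsum ω, pow_add]
      have : t * t ^ (X 0 ω - 1) = t ^ X 0 ω := by
        rw [mul_comm, ← pow_succ, Nat.sub_add_cancel h]
      calc t * ((X 0 ω : ℝ) * t ^ (X 0 ω - 1) * t ^ Sm ω)
          = (X 0 ω : ℝ) * (t * t ^ (X 0 ω - 1)) * t ^ Sm ω := by ring
        _ = (X 0 ω : ℝ) * (t ^ X 0 ω * t ^ Sm ω) := by rw [this]; ring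
  have hmain : t * ∫ ω, (X 0 ω : ℝ) * t ^ (X 0 ω - 1) * t ^ Sm ω ∂μ
      = ∫ ω, (X 0 ω : ℝ) * t ^ S ω ∂μ := by
    rw [← integral_const_mul]
    exact integral_congr_ae (Filter.Eventually.of_forall hptw)
  rw [hmain]
  -- series decomposition
  have hintS : Integrable (fun ω => (X 0 ω : ℝ) * t ^ S ω) μ := by
    refine hint.mono ?_ ?_
    · exact (((measurable_from_top (f := fun m : ℕ => (m : ℝ))).comp (hX 0)).mul
        ((measurable_from_top (f := fun m : ℕ => t ^ m)).comp hSmeas)).aestronglyMeasurable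
    · refine Filter.Eventually.of_forall fun ω => ?_
      rw [norm_mul]
      have h3 : ‖t ^ S ω‖ ≤ 1 := by
        rw [norm_pow, Real.norm_eq_abs]; exact pow_le_one₀ (abs_nonneg t) habs.le
      calc ‖(X 0 ω : ℝ)‖ * ‖t ^ S ω‖ ≤ ‖(X 0 ω : ℝ)‖ * 1 :=
          mul_le_mul_of_nonneg_left h3 (norm_nonneg _)
        _ = ‖(X 0 ω : ℝ)‖ := mul_one _
  have hsets : ∀ k : ℕ, MeasurableSet {ω | S ω = k} := fun k =>
    hSmeas (measurableSet_singleton k)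
  have hunion : (⋃ k : ℕ, {ω | S ω = k}) = Set.univ :=
    Set.eq_univ_of_forall fun ω => Set.mem_iUnion.2 ⟨S ω, rfl⟩
  have hdisj : Pairwise (Function.onFun Disjoint fun k : ℕ => {ω | S ω = k}) := by
    intro i j hij
    refine Set.disjoint_left.2 fun ω hi hj => hij ?_
    simp only [Set.mem_setOf_eq] at hi hj
    rw [← hi, ← hj]
  have hsum := hasSum_integral_iUnion (μ := μ) (f := fun ω => (X 0 ω : ℝ) * t ^ S ω)
    hsets hdisj (by rw [hunion]; exact hintS.integrableOn)
  rw [hunion] at hsum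
  rw [Measure.restrict_univ] at hsum
  have hterm : ∀ k : ℕ, (∫ ω in {ω | S ω = k}, (X 0 ω : ℝ) * t ^ S ω ∂μ)
      = t ^ k * ∫ ω in {ω | S ω = k}, (X 0 ω : ℝ) ∂μ := by
    intro k
    rw [← integral_const_mul]
    refine setIntegral_congr_fun (hsets k) fun ω hω => ?_
    simp only [Set.mem_setOf_eq] at hω
    rw [hω]; ring
  rw [← hsum.tsum_eq]
  exact tsum_congr hterm
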